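/- Suppose d̃ ≤ d̂, let u be a unit vector and let r ≥ 0 be a real number. Then dist (P̃ + r • u) C ≤ d̂ if and only if r ≤ R(C, d̂, P̃, u). (The intersection of the ray from P̃ in direction u with the closed disk of radius d̂ around C is exactly the segment of length R(C, d̂, P̃, u).) -/

import Mathlib

/-- The plane. -/
local notation "E" => EuclideanSpace ℝ (Fin 2)

/-- Directional uncertainty `R(C, d̂, P̃, u) = s + sqrt (d̂² − d̃² + s²)`,
where `d̃ = ‖C − P̃‖` and `s = ⟪C − P̃, u⟫_ℝ`. -/
noncomputable def dirUnc (C Pt : EuclideanSpace ℝ (Fin 2)) (dhat : ℝ)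
    (u : EuclideanSpace ℝ (Fin 2)) : ℝ :=
  (inner ℝ (C - Pt) u : ℝ) +
    Real.sqrt (dhat ^ 2 - ‖C - Pt‖ ^ 2 + (inner ℝ (C - Pt) u : ℝ) ^ 2)


/-- The intersection of the ray from `P̃` in direction `u` with the closed disk
of radius `d̂` around `C` is exactly the segment of length `R(C, d̂, P̃, u)`. -/
theorem dirUnc_ray_characterization (C Pt : E) (dhat : ℝ) (h : ‖C - Pt‖ ≤ dhat)
    (u : E) (hu : ‖u‖ = 1) (r : ℝ) (hr : 0 ≤ r) :
    dist (Pt + r • u) C ≤ dhat ↔ r ≤ dirUnc C Pt dhat u := by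
  set s : ℝ := (inner ℝ (C - Pt) u : ℝ) with hs
  set D : ℝ := dhat ^ 2 - ‖C - Pt‖ ^ 2 + s ^ 2 with hD
  have hd0 : (0:ℝ) ≤ ‖C - Pt‖ := norm_nonneg _
  have hdhat0 : (0:ℝ) ≤ dhat := le_trans hd0 h
  have hDs : s ^ 2 ≤ D := by nlinarith
  have hD0 : 0 ≤ D := le_trans (sq_nonneg s) hDs
  set q : ℝ := Real.sqrt D with hq
  have hq0 : 0 ≤ q := Real.sqrt_nonneg _
  have hq2 : q ^ 2 = D := Real.sq_sqrt hD0
  have hqs : |s| ≤ q := by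
    rw [← Real.sqrt_sq_eq_abs]
    exact Real.sqrt_le_sqrt hDs
  have hqs' : -s ≤ q := (neg_le_abs s).trans hqs
  have hqs'' : s ≤ q := (le_abs_self s).trans hqs
  have hsq : dist (Pt + r • u) C ^ 2 = r ^ 2 - 2 * r * s + ‖C - Pt‖ ^ 2 := by
    rw [dist_eq_norm]
    have hrw : Pt + r • u - C = r • u - (C - Pt) := by abel
    rw [hrw, @norm_sub_sq_real, real_inner_smul_left, norm_smul, hs]
    simp [hu, abs_of_nonneg hr, real_inner_comm u (C - Pt)]
    ring
  have hdist0 : 0 ≤ dist (Pt + r • u) C := dist_nonneg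
  have hiff : dist (Pt + r • u) C ≤ dhat ↔ dist (Pt + r • u) C ^ 2 ≤ dhat ^ 2 := by
    constructor
    · intro h'; nlinarith
    · intro h'; nlinarith
  rw [hiff, hsq]
  unfold dirUnc
  rw [← hs, ← hD, ← hq]
  constructor
  · intro h'; nlinarith
  · intro h'
    nlinarith [mul_nonneg (by linarith : (0:ℝ) ≤ q - (r - s)) (by linarith : (0:ℝ) ≤ q + (r - s))]
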